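/- Consider problem (P₂) and suppose there exists (x,z) ∈ ℝ^l × ℝ^k with Σᵢ(½αᵢxᵢ² + bᵢxᵢ) + Σⱼ zⱼ + c < 0. Then the infimum of (P₂) equals sup over ν ≥ 0 of ρ(ν) = cν + c₀ + Σᵢ hᵢ(ν) + g(ν) (as extended real numbers), where hᵢ(ν) = −(νbᵢ + eᵢ)²/(2(ναᵢ + δᵢ)) if ναᵢ + δᵢ > 0, hᵢ(ν) = 0 if ναᵢ + δᵢ = 0 and eᵢ + νbᵢ = 0, and hᵢ(ν) = −∞ otherwise; and g(ν) = 0 if ζⱼ + ν = 0 for all j = 1,…,k, and g(ν) = −∞ otherwise. -/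

import Mathlib

open scoped Classical

/-- The objective `f(x,u,w) = Σᵢ(½δᵢxᵢ² + eᵢxᵢ) + Σⱼ(ζⱼuⱼwⱼ + ½wⱼ² + ηⱼwⱼ)` of problem (P₁). -/
noncomputable def quadObj {l k : ℕ} (δ e : Fin l → ℝ) (ζ η : Fin k → ℝ)
    (x : Fin l → ℝ) (u w : Fin k → ℝ) : ℝ :=
  (∑ i, ((1/2) * δ i * x i ^ 2 + e i * x i)) +
    ∑ j, (ζ j * u j * w j + (1/2) * w j ^ 2 + η j * w j)

/-- The constraint function `h(x,u,w) = Σᵢ(½αᵢxᵢ² + bᵢxᵢ) + Σⱼ uⱼwⱼ + c` of problem (P₁). -/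
noncomputable def quadCon {l k : ℕ} (α b : Fin l → ℝ) (c : ℝ)
    (x : Fin l → ℝ) (u w : Fin k → ℝ) : ℝ :=
  (∑ i, ((1/2) * α i * x i ^ 2 + b i * x i)) + (∑ j, u j * w j) + c

/-- The SOCP objective `Σᵢ(δᵢyᵢ + eᵢxᵢ) + Σⱼ ζⱼzⱼ + c₀` of problem (P₂). -/
noncomputable def socpObj {l k : ℕ} (δ e : Fin l → ℝ) (ζ : Fin k → ℝ) (c₀ : ℝ)
    (x y : Fin l → ℝ) (z : Fin k → ℝ) : ℝ :=
  (∑ i, (δ i * y i + e i * x i)) + (∑ j, ζ j * z j) + c₀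

/-- The linear part `Σᵢ(αᵢyᵢ + bᵢxᵢ) + Σⱼ zⱼ` of the SOCP constraint in (P₂). -/
noncomputable def socpConLhs {l k : ℕ} (α b : Fin l → ℝ)
    (x y : Fin l → ℝ) (z : Fin k → ℝ) : ℝ :=
  (∑ i, (α i * y i + b i * x i)) + ∑ j, z j

/-- The optimal value (in the extended reals) of the SOCP problem (P₂). -/
noncomputable def socpVal {l k : ℕ} (δ e α b : Fin l → ℝ) (ζ : Fin k → ℝ) (c c₀ : ℝ) : EReal :=
  sInf {v : EReal | ∃ (x y : Fin l → ℝ) (z : Fin k → ℝ),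
    socpConLhs α b x y z + c ≤ 0 ∧ (∀ i, (1/2) * x i ^ 2 ≤ y i) ∧
    v = (socpObj δ e ζ c₀ x y z : EReal)}

/-- The dual term `hᵢ(ν)` of Theorem 2.7 of Jiang–Li–Wu, with values in `ℝ ∪ {−∞}`. -/
noncomputable def hDual (αi δi bi ei ν : ℝ) : EReal :=
  if 0 < ν * αi + δi then ((-(ν * bi + ei) ^ 2 / (2 * (ν * αi + δi)) : ℝ) : EReal)
  else if ν * αi + δi = 0 ∧ ei + ν * bi = 0 then (0 : EReal)
  else ⊥

/-- The dual term `g(ν)` of Theorem 2.7 of Jiang–Li–Wu, with values in `ℝ ∪ {−∞}`. -/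
noncomputable def gDual {k : ℕ} (ζ : Fin k → ℝ) (ν : ℝ) : EReal :=
  if ∀ j, ζ j + ν = 0 then (0 : EReal) else ⊥


lemma ereal_coe_sum {ι : Type*} (s : Finset ι) (f : ι → ℝ) :
    ((∑ i ∈ s, f i : ℝ) : EReal) = ∑ i ∈ s, ((f i : ℝ) : EReal) := by
  induction s using Finset.cons_induction with
  | empty => simp
  | cons a s ha ih => rw [Finset.sum_cons, Finset.sum_cons, EReal.coe_add, ih]


lemma lag_eval {l k : ℕ} (δ e α b : Fin l → ℝ) (ζ : Fin k → ℝ) (c c₀ ν : ℝ)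
    (x y : Fin l → ℝ) (z : Fin k → ℝ) :
    socpObj δ e ζ c₀ x y z + ν * (socpConLhs α b x y z + c) =
    (c * ν + c₀) + (∑ i, ((ν * α i + δ i) * y i + (ν * b i + e i) * x i))
      + ∑ j, (ζ j + ν) * z j := by
  have h1 : (∑ i, ((ν * α i + δ i) * y i + (ν * b i + e i) * x i))
      = (∑ i, (δ i * y i + e i * x i)) + ν * (∑ i, (α i * y i + b i * x i)) := by
    rw [Finset.mul_sum, ← Finset.sum_add_distrib]
    exact Finset.sum_congr rfl fun i _ => by ring
  have h2 : (∑ j, (ζ j + ν) * z j)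
      = (∑ j, ζ j * z j) + ν * ∑ j, z j := by
    rw [Finset.mul_sum, ← Finset.sum_add_distrib]
    exact Finset.sum_congr rfl fun j _ => by ring
  simp only [socpObj, socpConLhs, h1, h2]
  ring


lemma combo_obj {l k : ℕ} (δ e : Fin l → ℝ) (ζ : Fin k → ℝ) (c₀ θ μ : ℝ) (hs : θ + μ = 1)
    (x y x' y' : Fin l → ℝ) (z z' : Fin k → ℝ) :
    socpObj δ e ζ c₀ (fun i => θ * x i + μ * x' i) (fun i => θ * y i + μ * y' i)
      (fun j => θ * z j + μ * z' j)
    = θ * socpObj δ e ζ c₀ x y z + μ * socpObj δ e ζ c₀ x' y' z' := by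
  have h1 : (∑ i, (δ i * (θ * y i + μ * y' i) + e i * (θ * x i + μ * x' i)))
      = θ * (∑ i, (δ i * y i + e i * x i)) + μ * ∑ i, (δ i * y' i + e i * x' i) := by
    rw [Finset.mul_sum, Finset.mul_sum, ← Finset.sum_add_distrib]
    exact Finset.sum_congr rfl fun i _ => by ring
  have h2 : (∑ j, ζ j * (θ * z j + μ * z' j))
      = θ * (∑ j, ζ j * z j) + μ * ∑ j, ζ j * z' j := by
    rw [Finset.mul_sum, Finset.mul_sum, ← Finset.sum_add_distrib]
    exact Finset.sum_congr rfl fun j _ => by ring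
  simp only [socpObj, h1, h2]
  have : θ * c₀ + μ * c₀ = c₀ := by rw [← add_mul, hs, one_mul]
  linarith [this]


lemma combo_con {l k : ℕ} (α b : Fin l → ℝ) (θ μ : ℝ)
    (x y x' y' : Fin l → ℝ) (z z' : Fin k → ℝ) :
    socpConLhs α b (fun i => θ * x i + μ * x' i) (fun i => θ * y i + μ * y' i)
      (fun j => θ * z j + μ * z' j)
    = θ * socpConLhs α b x y z + μ * socpConLhs α b x' y' z' := by
  have h1 : (∑ i, (α i * (θ * y i + μ * y' i) + b i * (θ * x i + μ * x' i)))
      = θ * (∑ i, (α i * y i + b i * x i)) + μ * ∑ i, (α i * y' i + b i * x' i) := by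
    rw [Finset.mul_sum, Finset.mul_sum, ← Finset.sum_add_distrib]
    exact Finset.sum_congr rfl fun i _ => by ring
  have h2 : (∑ j, (θ * z j + μ * z' j))
      = θ * (∑ j, z j) + μ * ∑ j, z' j := by
    rw [Finset.mul_sum, Finset.mul_sum, ← Finset.sum_add_distrib]
  simp only [socpConLhs, h1, h2]
  ring


lemma hDual_le (αi δi bi ei ν xi yi : ℝ) (hc : (1/2) * xi ^ 2 ≤ yi) :
    hDual αi δi bi ei ν ≤ (((ν * αi + δi) * yi + (ν * bi + ei) * xi : ℝ) : EReal) := by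
  unfold hDual
  split_ifs with h1 h2
  · rw [EReal.coe_le_coe_iff, div_le_iff₀ (by linarith)]
    nlinarith [sq_nonneg ((ν * αi + δi) * xi + (ν * bi + ei)), mul_le_mul_of_nonneg_left hc h1.le]
  · have hB : ν * bi + ei = 0 := by linarith [h2.2]
    rw [h2.1, hB]
    norm_num
  · exact bot_le


lemma gDual_le {k : ℕ} (ζ : Fin k → ℝ) (ν : ℝ) (z : Fin k → ℝ) :
    gDual ζ ν ≤ ((∑ j, (ζ j + ν) * z j : ℝ) : EReal) := by
  unfold gDual
  split_ifs with h
  · have : (∑ j, (ζ j + ν) * z j) = 0 := by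
      apply Finset.sum_eq_zero; intro j _; rw [h j, zero_mul]
    rw [this]; norm_num
  · exact bot_le


lemma weak_lag {l k : ℕ} (δ e α b : Fin l → ℝ) (ζ : Fin k → ℝ) (c c₀ ν : ℝ)
    (x y : Fin l → ℝ) (z : Fin k → ℝ) (hc : ∀ i, (1/2) * x i ^ 2 ≤ y i) :
    ((c * ν + c₀ : ℝ) : EReal) + (∑ i, hDual (α i) (δ i) (b i) (e i) ν) + gDual ζ ν ≤
      (((c * ν + c₀) + (∑ i, ((ν * α i + δ i) * y i + (ν * b i + e i) * x i))
        + ∑ j, (ζ j + ν) * z j : ℝ) : EReal) := by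
  have hsplit : (((c * ν + c₀) + (∑ i, ((ν * α i + δ i) * y i + (ν * b i + e i) * x i))
      + ∑ j, (ζ j + ν) * z j : ℝ) : EReal)
      = ((c * ν + c₀ : ℝ) : EReal)
        + ((∑ i, ((ν * α i + δ i) * y i + (ν * b i + e i) * x i) : ℝ) : EReal)
        + ((∑ j, (ζ j + ν) * z j : ℝ) : EReal) := by
    rw [EReal.coe_add, EReal.coe_add]
  rw [hsplit, ereal_coe_sum]
  exact add_le_add (add_le_add le_rfl
    (Finset.sum_le_sum fun i _ => hDual_le _ _ _ _ _ _ _ (hc i))) (gDual_le ζ ν z)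


lemma strong_lag {l k : ℕ} (δ e α b : Fin l → ℝ) (ζ : Fin k → ℝ) (c c₀ ν Vr : ℝ)
    (H : ∀ (x y : Fin l → ℝ) (z : Fin k → ℝ), (∀ i, (1/2) * x i ^ 2 ≤ y i) →
      Vr ≤ (c * ν + c₀) + (∑ i, ((ν * α i + δ i) * y i + (ν * b i + e i) * x i))
        + ∑ j, (ζ j + ν) * z j) :
    (Vr : EReal) ≤ ((c * ν + c₀ : ℝ) : EReal)
      + (∑ i, hDual (α i) (δ i) (b i) (e i) ν) + gDual ζ ν := by
  set K := c * ν + c₀ with hKdef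
  -- base point
  have hK : Vr ≤ K := by
    have h0 := H 0 0 0 (by intro i; norm_num)
    simpa using h0
  -- single x/y-coordinate evaluation
  have H1 : ∀ (i : Fin l) (yt xt : ℝ), (1/2) * xt ^ 2 ≤ yt →
      Vr ≤ K + ((ν * α i + δ i) * yt + (ν * b i + e i) * xt) := by
    intro i yt xt hcc
    have hcone : ∀ i', (1/2) * (if i' = i then xt else 0) ^ 2
        ≤ (if i' = i then yt else 0 : ℝ) := by
      intro i'
      by_cases h : i' = i
      · simp only [h, if_pos]; exact hcc
      · simp [h]
    have := H (fun i' => if i' = i then xt else 0) (fun i' => if i' = i then yt else 0) 0 hcone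
    have hsum : (∑ i', ((ν * α i' + δ i') * (if i' = i then yt else 0)
        + (ν * b i' + e i') * (if i' = i then xt else 0)))
        = (ν * α i + δ i) * yt + (ν * b i + e i) * xt := by
      rw [Finset.sum_eq_single i (fun j _ hj => by simp [hj])
        (fun h => absurd (Finset.mem_univ i) h)]
      simp
    rw [hsum] at this
    simpa using this
  -- single z-coordinate evaluation
  have H2 : ∀ (j : Fin k) (zt : ℝ), Vr ≤ K + (ζ j + ν) * zt := by
    intro j zt
    have := H 0 0 (fun j' => if j' = j then zt else 0) (by intro i; norm_num)
    have hsum : (∑ j', (ζ j' + ν) * (if j' = j then zt else 0)) = (ζ j + ν) * zt := by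
      rw [Finset.sum_eq_single j (fun j' _ hj => by simp [hj])
        (fun h => absurd (Finset.mem_univ j) h)]
      simp
    rw [hsum] at this
    simpa using this
  -- nonnegativity of the quadratic coefficients
  have hA : ∀ i, 0 ≤ ν * α i + δ i := by
    intro i
    by_contra h
    push_neg at h
    have hA0 : ν * α i + δ i ≠ 0 := ne_of_lt h
    set t := (K - Vr + 1) / (-(ν * α i + δ i)) with htdef
    have ht : 0 ≤ t := div_nonneg (by linarith) (by linarith)
    have h1 := H1 i t 0 (by simpa using ht)
    have hmc : (K - Vr + 1) / -(ν * α i + δ i) * -(ν * α i + δ i) = K - Vr + 1 :=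
      div_mul_cancel₀ _ (neg_ne_zero.2 hA0)
    have hAt : (ν * α i + δ i) * t = -(K - Vr + 1) := by
      rw [htdef]; linear_combination -hmc
    rw [mul_zero, add_zero, hAt] at h1
    linarith
  have hB : ∀ i, ν * α i + δ i = 0 → ν * b i + e i = 0 := by
    intro i hA0
    by_contra hB0
    set xt := -(K - Vr + 1) / (ν * b i + e i) with hxdef
    have h1 := H1 i ((1/2) * xt ^ 2) xt le_rfl
    have hmc : -(K - Vr + 1) / (ν * b i + e i) * (ν * b i + e i) = -(K - Vr + 1) :=
      div_mul_cancel₀ _ hB0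
    have hBx : (ν * b i + e i) * xt = -(K - Vr + 1) := by
      rw [hxdef]; linear_combination hmc
    rw [hA0, zero_mul, zero_add, hBx] at h1
    linarith
  have hC : ∀ j, ζ j + ν = 0 := by
    intro j
    by_contra hC0
    set zt := -(K - Vr + 1) / (ζ j + ν) with hzdef
    have h2 := H2 j zt
    have hmc : -(K - Vr + 1) / (ζ j + ν) * (ζ j + ν) = -(K - Vr + 1) :=
      div_mul_cancel₀ _ hC0
    have hCz : (ζ j + ν) * zt = -(K - Vr + 1) := by
      rw [hzdef]; linear_combination hmc
    rw [hCz] at h2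
    linarith
  -- closed form of the dual terms
  set r : Fin l → ℝ := fun i =>
    if 0 < ν * α i + δ i then -(ν * b i + e i) ^ 2 / (2 * (ν * α i + δ i)) else 0 with hrdef
  have hEq : ∀ i, hDual (α i) (δ i) (b i) (e i) ν = ((r i : ℝ) : EReal) := by
    intro i
    by_cases h : 0 < ν * α i + δ i
    · simp [hDual, hrdef, h]
    · have hA0 : ν * α i + δ i = 0 := le_antisymm (not_lt.1 h) (hA i)
      have hB0 : e i + ν * b i = 0 := by linarith [hB i hA0]
      simp [hDual, hrdef, h, hA0, hB0]
  have hg : gDual ζ ν = 0 := if_pos hC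
  -- attainment point
  set xs : Fin l → ℝ := fun i =>
    if 0 < ν * α i + δ i then -(ν * b i + e i) / (ν * α i + δ i) else 0 with hxsdef
  have hfin := H xs (fun i => (1/2) * xs i ^ 2) 0 (fun i => le_rfl)
  have hterm : ∀ i, (ν * α i + δ i) * ((1/2) * xs i ^ 2) + (ν * b i + e i) * xs i = r i := by
    intro i
    by_cases h : 0 < ν * α i + δ i
    · have hne : ν * α i + δ i ≠ 0 := ne_of_gt h
      simp only [hxsdef, hrdef, if_pos h]
      field_simp
      ring
    · simp [hxsdef, hrdef, h]
  have hfin' : Vr ≤ K + ∑ i, r i := by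
    have hs : (∑ i, ((ν * α i + δ i) * ((1/2) * xs i ^ 2) + (ν * b i + e i) * xs i))
        = ∑ i, r i := Finset.sum_congr rfl fun i _ => hterm i
    rw [hs] at hfin
    simpa using hfin
  -- conclude
  rw [hg, add_zero]
  have : (∑ i, hDual (α i) (δ i) (b i) (e i) ν) = ((∑ i, r i : ℝ) : EReal) := by
    rw [ereal_coe_sum]
    exact Finset.sum_congr rfl fun i _ => hEq i
  rw [this, ← EReal.coe_add, EReal.coe_le_coe_iff]
  exact hfin'


/-- Theorem 2.7 of Jiang–Li–Wu: under the Slater condition, strong duality holds between the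
SOCP problem (P₂) and its single-variable Lagrangian dual (D₁). -/
theorem stmt_11 (l k : ℕ) (δ e α b : Fin l → ℝ) (ζ : Fin k → ℝ) (c c₀ : ℝ)
    (hslater : ∃ (x : Fin l → ℝ) (z : Fin k → ℝ),
      (∑ i, ((1/2) * α i * x i ^ 2 + b i * x i)) + (∑ j, z j) + c < 0) :
    socpVal δ e α b ζ c c₀ =
      sSup {v : EReal | ∃ ν : ℝ, 0 ≤ ν ∧
        v = ((c * ν + c₀ : ℝ) : EReal) +
          (∑ i, hDual (α i) (δ i) (b i) (e i) ν) + gDual ζ ν} := by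
  classical
  obtain ⟨xb, zb, hsl⟩ := hslater
  have hconb : socpConLhs α b xb (fun i => (1/2) * xb i ^ 2) zb + c < 0 := by
    have he : socpConLhs α b xb (fun i => (1/2) * xb i ^ 2) zb
        = (∑ i, ((1/2) * α i * xb i ^ 2 + b i * xb i)) + ∑ j, zb j := by
      unfold socpConLhs
      congr 1
      exact Finset.sum_congr rfl fun i _ => by ring
    rw [he]; linarith
  simp only [socpVal]
  set PS : Set EReal := {v : EReal | ∃ (x y : Fin l → ℝ) (z : Fin k → ℝ),
    socpConLhs α b x y z + c ≤ 0 ∧ (∀ i, (1/2) * x i ^ 2 ≤ y i) ∧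
    v = (socpObj δ e ζ c₀ x y z : EReal)} with hPS
  set DS : Set EReal := {v : EReal | ∃ ν : ℝ, 0 ≤ ν ∧
    v = ((c * ν + c₀ : ℝ) : EReal) +
      (∑ i, hDual (α i) (δ i) (b i) (e i) ν) + gDual ζ ν} with hDS
  have hmemb : (socpObj δ e ζ c₀ xb (fun i => (1/2) * xb i ^ 2) zb : EReal) ∈ PS :=
    ⟨xb, fun i => (1/2) * xb i ^ 2, zb, hconb.le, fun i => le_rfl, rfl⟩
  have hVle : sInf PS ≤ (socpObj δ e ζ c₀ xb (fun i => (1/2) * xb i ^ 2) zb : EReal) :=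
    sInf_le hmemb
  refine le_antisymm ?_ ?_
  · -- sInf ≤ sSup : strong duality
    by_cases hbot : sInf PS = ⊥
    · rw [hbot]; exact bot_le
    have htop : sInf PS ≠ ⊤ := by
      intro h
      rw [h] at hVle
      exact (EReal.coe_ne_top _) (top_le_iff.1 hVle)
    obtain ⟨Vr, hVr⟩ : ∃ Vr : ℝ, (Vr : EReal) = sInf PS :=
      ⟨(sInf PS).toReal, EReal.coe_toReal htop hbot⟩
    have hlb : ∀ (x y : Fin l → ℝ) (z : Fin k → ℝ), socpConLhs α b x y z + c ≤ 0 →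
        (∀ i, (1/2) * x i ^ 2 ≤ y i) → Vr ≤ socpObj δ e ζ c₀ x y z := by
      intro x y z h1 h2
      have h3 : sInf PS ≤ (socpObj δ e ζ c₀ x y z : EReal) := sInf_le ⟨x, y, z, h1, h2, rfl⟩
      rw [← hVr] at h3
      exact_mod_cast h3
    set T : Set ℝ := {r | ∃ (x y : Fin l → ℝ) (z : Fin k → ℝ),
      (∀ i, (1/2) * x i ^ 2 ≤ y i) ∧ socpConLhs α b x y z + c < 0 ∧
      r = (socpObj δ e ζ c₀ x y z - Vr) / (-(socpConLhs α b x y z + c))} with hT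
    have hTne : T.Nonempty :=
      ⟨_, xb, fun i => (1/2) * xb i ^ 2, zb, fun i => le_rfl, hconb, rfl⟩
    have hT0 : ∀ r ∈ T, 0 ≤ r := by
      rintro r ⟨x, y, z, h1, h2, rfl⟩
      exact div_nonneg (by linarith [hlb x y z h2.le h1]) (by linarith)
    have hTbdd : BddBelow T := ⟨0, fun r hr => hT0 r hr⟩
    set ν := sInf T with hνdef
    have hν0 : 0 ≤ ν := le_csInf hTne hT0
    have key : ∀ (x y : Fin l → ℝ) (z : Fin k → ℝ), (∀ i, (1/2) * x i ^ 2 ≤ y i) →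
        Vr ≤ socpObj δ e ζ c₀ x y z + ν * (socpConLhs α b x y z + c) := by
      intro x y z hc
      rcases lt_trichotomy (socpConLhs α b x y z + c) 0 with ht | ht | ht
      · have hm : (socpObj δ e ζ c₀ x y z - Vr) / (-(socpConLhs α b x y z + c)) ∈ T :=
          ⟨x, y, z, hc, ht, rfl⟩
        have h1 : ν ≤ (socpObj δ e ζ c₀ x y z - Vr) / (-(socpConLhs α b x y z + c)) :=
          csInf_le hTbdd hm
        rw [le_div_iff₀ (by linarith)] at h1
        nlinarith [h1]
      · rw [ht, mul_zero, add_zero]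
        exact hlb x y z ht.le hc
      · have hq : (Vr - socpObj δ e ζ c₀ x y z) / (socpConLhs α b x y z + c) ≤ ν := by
          apply le_csInf hTne
          rintro r ⟨x₁, y₁, z₁, hc₁, ht₁, rfl⟩
          set t := socpConLhs α b x y z + c with htdef
          set t₁ := socpConLhs α b x₁ y₁ z₁ + c with ht₁def
          have hD : (0:ℝ) < t - t₁ := by linarith
          set θ := -t₁ / (t - t₁) with hθdef
          set μ := t / (t - t₁) with hμdef
          have hθ : 0 ≤ θ := div_nonneg (by linarith) hD.le
          have hμ : 0 ≤ μ := div_nonneg ht.le hD.le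
          have hs : θ + μ = 1 := by
            rw [hθdef, hμdef, ← add_div, div_eq_one_iff_eq (ne_of_gt hD)]
            ring
          have h1 : θ * (t - t₁) = -t₁ := div_mul_cancel₀ _ (ne_of_gt hD)
          have h2 : μ * (t - t₁) = t := div_mul_cancel₀ _ (ne_of_gt hD)
          have hcone2 : ∀ i, (1/2) * (θ * x i + μ * x₁ i) ^ 2 ≤ θ * y i + μ * y₁ i := by
            intro i
            nlinarith [hc i, hc₁ i, mul_nonneg hθ hμ, sq_nonneg (x i - x₁ i), hθ, hμ, hs,
              mul_le_mul_of_nonneg_left (hc i) hθ, mul_le_mul_of_nonneg_left (hc₁ i) hμ]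
          have hconc : socpConLhs α b (fun i => θ * x i + μ * x₁ i)
              (fun i => θ * y i + μ * y₁ i) (fun j => θ * z j + μ * z₁ j) + c = 0 := by
            rw [combo_con α b θ μ x y x₁ y₁ z z₁]
            have hLt : socpConLhs α b x y z = t - c := by rw [htdef]; ring
            have hLt₁ : socpConLhs α b x₁ y₁ z₁ = t₁ - c := by rw [ht₁def]; ring
            rw [hLt, hLt₁]
            linear_combination h1 + (t₁ - c) * hs
          have hVrc : Vr ≤ θ * socpObj δ e ζ c₀ x y z + μ * socpObj δ e ζ c₀ x₁ y₁ z₁ := by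
            have h3 := hlb (fun i => θ * x i + μ * x₁ i) (fun i => θ * y i + μ * y₁ i)
              (fun j => θ * z j + μ * z₁ j) (le_of_eq hconc) hcone2
            rwa [combo_obj δ e ζ c₀ θ μ hs x y x₁ y₁ z z₁] at h3
          set o := socpObj δ e ζ c₀ x y z with ho
          set o₁ := socpObj δ e ζ c₀ x₁ y₁ z₁ with ho₁
          have h4 : Vr * (t - t₁) ≤ (θ * o + μ * o₁) * (t - t₁) :=
            mul_le_mul_of_nonneg_right hVrc hD.le
          have h5 : (θ * o + μ * o₁) * (t - t₁) = -t₁ * o + t * o₁ := by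
            linear_combination o * h1 + o₁ * h2
          rw [div_le_div_iff₀ ht (by linarith : (0:ℝ) < -t₁)]
          nlinarith [h4, h5]
        rw [div_le_iff₀ ht] at hq
        linarith
    have hstrong := strong_lag δ e α b ζ c c₀ ν Vr (fun x y z hc => by
      have h6 := key x y z hc
      rwa [lag_eval δ e α b ζ c c₀ ν x y z] at h6)
    rw [← hVr]
    exact le_trans hstrong (le_sSup ⟨ν, hν0, rfl⟩)
  · -- sSup ≤ sInf : weak duality
    apply sSup_le
    rintro v ⟨ν, hν, rfl⟩
    apply le_sInf
    rintro w ⟨x, y, z, hcon, hcone, rfl⟩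
    have h1 := weak_lag δ e α b ζ c c₀ ν x y z hcone
    rw [← lag_eval δ e α b ζ c c₀ ν x y z] at h1
    refine le_trans h1 ?_
    rw [EReal.coe_le_coe_iff]
    have h2 := mul_nonneg hν (neg_nonneg.2 hcon)
    nlinarith [h2]
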